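/- For every θ ∈ ℂ⁴, the cubic surface S(θ) has at most four singular points; that is, the set {x ∈ ℂ³ : f(x,θ) = 0 and ∂f/∂x₁(x,θ) = ∂f/∂x₂(x,θ) = ∂f/∂x₃(x,θ) = 0} is finite with at most 4 elements. -/

import Mathlib

noncomputable section

/-- The defining cubic polynomial `f(x,θ)` of the character variety. -/
def pvF (θ : ℂ × ℂ × ℂ × ℂ) (x : ℂ × ℂ × ℂ) : ℂ :=
  x.1 * x.2.1 * x.2.2 + x.1 ^ 2 + x.2.1 ^ 2 + x.2.2 ^ 2
    - θ.1 * x.1 - θ.2.1 * x.2.1 - θ.2.2.1 * x.2.2 + θ.2.2.2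

/-- The set of singular points of the cubic surface `S(θ)`: points of `S(θ)` at
which all three partial derivatives of `f(·,θ)` vanish. -/
def singSet (θ : ℂ × ℂ × ℂ × ℂ) : Set (ℂ × ℂ × ℂ) :=
  {x | pvF θ x = 0 ∧
       x.2.1 * x.2.2 + 2 * x.1 - θ.1 = 0 ∧
       x.1 * x.2.2 + 2 * x.2.1 - θ.2.1 = 0 ∧
       x.1 * x.2.1 + 2 * x.2.2 - θ.2.2.1 = 0}

/-- Singular point predicate, scalar form. -/
def SingP (t1 t2 t3 t4 a b c : ℂ) : Prop :=
  a*b*c + a^2 + b^2 + c^2 - t1*a - t2*b - t3*c + t4 = 0 ∧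
  b*c + 2*a - t1 = 0 ∧ a*c + 2*b - t2 = 0 ∧ a*b + 2*c - t3 = 0

/-- No three distinct singular points are collinear. -/
lemma no3col {t1 t2 t3 t4 p1 p2 p3 q1 q2 q3 τ : ℂ}
    (hP : SingP t1 t2 t3 t4 p1 p2 p3) (hQ : SingP t1 t2 t3 t4 q1 q2 q3)
    (hR : SingP t1 t2 t3 t4 (p1+τ*(q1-p1)) (p2+τ*(q2-p2)) (p3+τ*(q3-p3)))
    (hτ0 : τ ≠ 0) (hτ1 : τ ≠ 1)
    (hQP : ¬(q1 = p1 ∧ q2 = p2 ∧ q3 = p3)) : False := by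
  obtain ⟨_, hP1, hP2, hP3⟩ := hP
  obtain ⟨_, hQ1, hQ2, hQ3⟩ := hQ
  obtain ⟨_, hR1, hR2, hR3⟩ := hR
  have hττ : τ * (τ - 1) ≠ 0 := mul_ne_zero hτ0 (sub_ne_zero.2 hτ1)
  have h23 : (q2-p2)*(q3-p3) = 0 := by
    have h : (τ*(τ-1)) * ((q2-p2)*(q3-p3)) = 0 := by
      linear_combination hR1 - (1-τ)*hP1 - τ*hQ1
    exact (mul_eq_zero.1 h).resolve_left hττ
  have h13 : (q1-p1)*(q3-p3) = 0 := by
    have h : (τ*(τ-1)) * ((q1-p1)*(q3-p3)) = 0 := by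
      linear_combination hR2 - (1-τ)*hP2 - τ*hQ2
    exact (mul_eq_zero.1 h).resolve_left hττ
  have h12 : (q1-p1)*(q2-p2) = 0 := by
    have h : (τ*(τ-1)) * ((q1-p1)*(q2-p2)) = 0 := by
      linear_combination hR3 - (1-τ)*hP3 - τ*hQ3
    exact (mul_eq_zero.1 h).resolve_left hττ
  have l1 : (q2-p2)*p3 + p2*(q3-p3) + 2*(q1-p1) = 0 := by
    linear_combination hQ1 - hP1 - h23
  have l2 : (q1-p1)*p3 + p1*(q3-p3) + 2*(q2-p2) = 0 := by
    linear_combination hQ2 - hP2 - h13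
  have l3 : (q1-p1)*p2 + p1*(q2-p2) + 2*(q3-p3) = 0 := by
    linear_combination hQ3 - hP3 - h12
  have hzero : q1 - p1 = 0 ∧ q2 - p2 = 0 ∧ q3 - p3 = 0 := by
    rcases mul_eq_zero.1 h12 with h1 | h2
    · rcases mul_eq_zero.1 h23 with h2 | h3
      · refine ⟨h1, h2, ?_⟩
        linear_combination (1/2)*l3 - (p2/2)*h1 - (p1/2)*h2
      · refine ⟨h1, ?_, h3⟩
        linear_combination (1/2)*l2 - (p3/2)*h1 - (p1/2)*h3
    · rcases mul_eq_zero.1 h13 with h1 | h3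
      · refine ⟨h1, h2, ?_⟩
        linear_combination (1/2)*l3 - (p2/2)*h1 - (p1/2)*h2
      · refine ⟨?_, h2, h3⟩
        linear_combination (1/2)*l1 - (p3/2)*h2 - (p2/2)*h3
  exact hQP ⟨sub_eq_zero.1 hzero.1, sub_eq_zero.1 hzero.2.1, sub_eq_zero.1 hzero.2.2⟩

/-- f vanishes on the line through two singular points. -/
lemma line_vanish {t1 t2 t3 t4 p1 p2 p3 q1 q2 q3 : ℂ}
    (hP : SingP t1 t2 t3 t4 p1 p2 p3) (hQ : SingP t1 t2 t3 t4 q1 q2 q3) (β : ℂ) :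
    (p1+β*(q1-p1)) * (p2+β*(q2-p2)) * (p3+β*(q3-p3))
      + (p1+β*(q1-p1))^2 + (p2+β*(q2-p2))^2 + (p3+β*(q3-p3))^2
      - t1*(p1+β*(q1-p1)) - t2*(p2+β*(q2-p2)) - t3*(p3+β*(q3-p3)) + t4 = 0 := by
  obtain ⟨hF1, hP1, hP2, hP3⟩ := hP
  obtain ⟨hF2, hQ1, hQ2, hQ3⟩ := hQ
  linear_combination (1-3*β^2+2*β^3)*hF1
    + (β-2*β^2+β^3)*((q1-p1)*hP1 + (q2-p2)*hP2 + (q3-p3)*hP3)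
    + (3*β^2-2*β^3)*hF2
    + (β^3-β^2)*((q1-p1)*hQ1 + (q2-p2)*hQ2 + (q3-p3)*hQ3)


lemma quad_contra {r u1 u2 v1 v2 : ℂ}
    (h20 : u1*u2*r + u1^2 + u2^2 = 0)
    (h02 : v1*v2*r + v1^2 + v2^2 = 0)
    (h11 : (u1*v2+v1*u2)*r + 2*u1*v1 + 2*u2*v2 = 0)
    (hD : u1*v2 - u2*v1 ≠ 0) : False := by
  apply hD
  have h : (u1*v2 - u2*v1)^2 = 0 := by
    linear_combination v2^2*h20 - v2*u2*h11 + u2^2*h02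
  exact sq_eq_zero_iff.1 h

lemma det2_ne {u1 u2 v1 v2 : ℂ} (hU : ¬(u1 = 0 ∧ u2 = 0))
    (hcol : ∀ l : ℂ, ¬(v1 = l*u1 ∧ v2 = l*u2)) : u1*v2 - u2*v1 ≠ 0 := by
  intro h
  rcases eq_or_ne u1 0 with h1 | h1
  · have h2 : u2 ≠ 0 := fun h2 => hU ⟨h1, h2⟩
    have hv1 : v1 = 0 := by
      have hz : u2 * v1 = 0 := by linear_combination -h + v2*h1
      exact (mul_eq_zero.1 hz).resolve_left h2
    exact hcol (v2/u2) ⟨by rw [hv1, h1, mul_zero], by field_simp⟩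
  · refine hcol (v1/u1) ⟨by field_simp, ?_⟩
    field_simp
    linear_combination h

/-- The key coefficient of a plane through three non-collinear singular points
is nonzero. -/
lemma cross_ne_zero {t1 t2 t3 t4 p1 p2 p3 U1 U2 U3 V1 V2 V3 : ℂ}
    (h1 : SingP t1 t2 t3 t4 p1 p2 p3)
    (h2 : SingP t1 t2 t3 t4 (p1+U1) (p2+U2) (p3+U3))
    (h3 : SingP t1 t2 t3 t4 (p1+V1) (p2+V2) (p3+V3))
    (hU : ¬(U1 = 0 ∧ U2 = 0 ∧ U3 = 0))
    (hcol : ∀ l : ℂ, ¬(V1 = l*U1 ∧ V2 = l*U2 ∧ V3 = l*U3)) :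
    U1*V2*p3 + U1*p2*V3 + p1*U2*V3 + V1*U2*p3 + V1*p2*U3 + p1*V2*U3
      + 2*(U1*V1+U2*V2+U3*V3) ≠ 0 := by
  intro hc
  obtain ⟨hF1, hP1, hP2, hP3⟩ := h1
  obtain ⟨hF2, hQ1, hQ2, hQ3⟩ := h2
  obtain ⟨hF3, hR1, hR2, hR3⟩ := h3
  have h30 : U1*U2*U3 = 0 := by
    linear_combination (U1*hQ1 + U2*hQ2 + U3*hQ3) + (U1*hP1 + U2*hP2 + U3*hP3)
      - 2*hF2 + 2*hF1
  have h03 : V1*V2*V3 = 0 := by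
    linear_combination (V1*hR1 + V2*hR2 + V3*hR3) + (V1*hP1 + V2*hP2 + V3*hP3)
      - 2*hF3 + 2*hF1
  have h21 : U1*U2*V3 + U1*V2*U3 + V1*U2*U3 = 0 := by
    linear_combination (V1*hQ1 + V2*hQ2 + V3*hQ3) - (V1*hP1 + V2*hP2 + V3*hP3) - hc
  have h12 : U1*V2*V3 + V1*U2*V3 + V1*V2*U3 = 0 := by
    linear_combination (U1*hR1 + U2*hR2 + U3*hR3) - (U1*hP1 + U2*hP2 + U3*hP3) - hc
  have h20full : U1*U2*p3 + U1*U3*p2 + U2*U3*p1 + U1^2 + U2^2 + U3^2 = 0 := by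
    linear_combination 3*hF2 - 3*hF1 - 2*(U1*hP1 + U2*hP2 + U3*hP3)
      - (U1*hQ1 + U2*hQ2 + U3*hQ3)
  have h02full : V1*V2*p3 + V1*V3*p2 + V2*V3*p1 + V1^2 + V2^2 + V3^2 = 0 := by
    linear_combination 3*hF3 - 3*hF1 - 2*(V1*hP1 + V2*hP2 + V3*hP3)
      - (V1*hR1 + V2*hR2 + V3*hR3)
  -- find a coordinate where both U and V vanish
  have key : (U1 = 0 ∧ V1 = 0) ∨ (U2 = 0 ∧ V2 = 0) ∨ (U3 = 0 ∧ V3 = 0) := by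
    rcases mul_eq_zero.1 h30 with h | hU3
    · rcases mul_eq_zero.1 h with hU1 | hU2
      · -- U1 = 0
        have h21' : V1*U2*U3 = 0 := by linear_combination h21 - (U2*V3 + V2*U3)*hU1
        rcases mul_eq_zero.1 h21' with h' | hU3b
        · rcases mul_eq_zero.1 h' with hV1 | hU2b
          · exact Or.inl ⟨hU1, hV1⟩
          · have h12' : V1*V2*U3 = 0 := by
              linear_combination h12 - V2*V3*hU1 - V1*V3*hU2b
            rcases mul_eq_zero.1 h12' with h'' | hU3c
            · rcases mul_eq_zero.1 h'' with hV1 | hV2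
              · exact Or.inl ⟨hU1, hV1⟩
              · exact Or.inr (Or.inl ⟨hU2b, hV2⟩)
            · exact absurd ⟨hU1, hU2b, hU3c⟩ hU
        · have h12' : V1*U2*V3 = 0 := by
            linear_combination h12 - V2*V3*hU1 - V1*V2*hU3b
          rcases mul_eq_zero.1 h12' with h'' | hV3
          · rcases mul_eq_zero.1 h'' with hV1 | hU2b
            · exact Or.inl ⟨hU1, hV1⟩
            · exact absurd ⟨hU1, hU2b, hU3b⟩ hU
          · exact Or.inr (Or.inr ⟨hU3b, hV3⟩)
      · -- U2 = 0
        have h21' : U1*V2*U3 = 0 := by linear_combination h21 - (U1*V3 + V1*U3)*hU2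
        rcases mul_eq_zero.1 h21' with h' | hU3b
        · rcases mul_eq_zero.1 h' with hU1b | hV2
          · have h12' : V1*V2*U3 = 0 := by
              linear_combination h12 - V2*V3*hU1b - V1*V3*hU2
            rcases mul_eq_zero.1 h12' with h'' | hU3c
            · rcases mul_eq_zero.1 h'' with hV1 | hV2
              · exact Or.inl ⟨hU1b, hV1⟩
              · exact Or.inr (Or.inl ⟨hU2, hV2⟩)
            · exact absurd ⟨hU1b, hU2, hU3c⟩ hU
          · exact Or.inr (Or.inl ⟨hU2, hV2⟩)
        · have h12' : U1*V2*V3 = 0 := by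
            linear_combination h12 - V1*V3*hU2 - V1*V2*hU3b
          rcases mul_eq_zero.1 h12' with h'' | hV3
          · rcases mul_eq_zero.1 h'' with hU1b | hV2
            · exact absurd ⟨hU1b, hU2, hU3b⟩ hU
            · exact Or.inr (Or.inl ⟨hU2, hV2⟩)
          · exact Or.inr (Or.inr ⟨hU3b, hV3⟩)
    · -- U3 = 0
      have h21' : U1*U2*V3 = 0 := by linear_combination h21 - (U1*V2 + V1*U2)*hU3
      rcases mul_eq_zero.1 h21' with h' | hV3
      · rcases mul_eq_zero.1 h' with hU1b | hU2b
        · have h12' : V1*U2*V3 = 0 := by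
            linear_combination h12 - V2*V3*hU1b - V1*V2*hU3
          rcases mul_eq_zero.1 h12' with h'' | hV3
          · rcases mul_eq_zero.1 h'' with hV1 | hU2b
            · exact Or.inl ⟨hU1b, hV1⟩
            · exact absurd ⟨hU1b, hU2b, hU3⟩ hU
          · exact Or.inr (Or.inr ⟨hU3, hV3⟩)
        · have h12' : U1*V2*V3 = 0 := by
            linear_combination h12 - V1*V3*hU2b - V1*V2*hU3
          rcases mul_eq_zero.1 h12' with h'' | hV3
          · rcases mul_eq_zero.1 h'' with hU1b | hV2
            · exact absurd ⟨hU1b, hU2b, hU3⟩ hU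
            · exact Or.inr (Or.inl ⟨hU2b, hV2⟩)
          · exact Or.inr (Or.inr ⟨hU3, hV3⟩)
      · exact Or.inr (Or.inr ⟨hU3, hV3⟩)
  rcases key with ⟨hu, hv⟩ | ⟨hu, hv⟩ | ⟨hu, hv⟩
  · -- U1 = V1 = 0, quadratic form in coords 2,3 with parameter p1
    refine quad_contra (r := p1) (u1 := U2) (u2 := U3) (v1 := V2) (v2 := V3)
      ?_ ?_ ?_ (det2_ne (fun h => hU ⟨hu, h.1, h.2⟩)
        (fun l hl => hcol l ⟨by rw [hv, hu, mul_zero], hl.1, hl.2⟩))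
    · linear_combination h20full - (U2*p3 + U3*p2 + U1)*hu
    · linear_combination h02full - (V2*p3 + V3*p2 + V1)*hv
    · linear_combination hc - (V2*p3 + p2*V3 + 2*V1)*hu - (U2*p3 + p2*U3)*hv
  · -- U2 = V2 = 0, coords 1,3 with parameter p2
    refine quad_contra (r := p2) (u1 := U1) (u2 := U3) (v1 := V1) (v2 := V3)
      ?_ ?_ ?_ (det2_ne (fun h => hU ⟨h.1, hu, h.2⟩)
        (fun l hl => hcol l ⟨hl.1, by rw [hv, hu, mul_zero], hl.2⟩))
    · linear_combination h20full - (U1*p3 + U3*p1 + U2)*hu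
    · linear_combination h02full - (V1*p3 + V3*p1 + V2)*hv
    · linear_combination hc - (p1*V3 + V1*p3)*hu - (U1*p3 + p1*U3 + 2*U2)*hv
  · -- U3 = V3 = 0, coords 1,2 with parameter p3
    refine quad_contra (r := p3) (u1 := U1) (u2 := U2) (v1 := V1) (v2 := V2)
      ?_ ?_ ?_ (det2_ne (fun h => hU ⟨h.1, h.2, hu⟩)
        (fun l hl => hcol l ⟨hl.1, hl.2, by rw [hv, hu, mul_zero]⟩))
    · linear_combination h20full - (U1*p2 + U2*p1 + U3)*hu
    · linear_combination h02full - (V1*p2 + V2*p1 + V3)*hv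
    · linear_combination hc - (V1*p2 + p1*V2 + 2*V3)*hu - (U1*p2 + p1*U2)*hv


/-- A fourth singular point in the plane of three non-collinear singular points
must be one of the three. -/
lemma in_plane_classify {t1 t2 t3 t4 p1 p2 p3 U1 U2 U3 V1 V2 V3 s t : ℂ}
    (h1 : SingP t1 t2 t3 t4 p1 p2 p3)
    (h2 : SingP t1 t2 t3 t4 (p1+U1) (p2+U2) (p3+U3))
    (h3 : SingP t1 t2 t3 t4 (p1+V1) (p2+V2) (p3+V3))
    (hq : SingP t1 t2 t3 t4 (p1+s*U1+t*V1) (p2+s*U2+t*V2) (p3+s*U3+t*V3))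
    (hc : U1*V2*p3 + U1*p2*V3 + p1*U2*V3 + V1*U2*p3 + V1*p2*U3 + p1*V2*U3
      + 2*(U1*V1+U2*V2+U3*V3) ≠ 0) :
    (s = 0 ∧ t = 0) ∨ (s = 1 ∧ t = 0) ∨ (s = 0 ∧ t = 1) := by
  obtain ⟨hF1, hP1, hP2, hP3⟩ := h1
  obtain ⟨hF2, hQ1, hQ2, hQ3⟩ := h2
  obtain ⟨hF3, hR1, hR2, hR3⟩ := h3
  obtain ⟨hFz, hZ1, hZ2, hZ3⟩ := hq
  set c : ℂ := U1*V2*p3 + U1*p2*V3 + p1*U2*V3 + V1*U2*p3 + V1*p2*U3 + p1*V2*U3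
      + 2*(U1*V1+U2*V2+U3*V3) with hcdef
  have e1 : c * (t - 2*s*t - t^2) = 0 := by
    rw [hcdef]
    linear_combination (U1*hZ1 + U2*hZ2 + U3*hZ3)
      - (-6*s+6*s^2)*hF1
      - (1-4*s+3*s^2-t^2)*(U1*hP1 + U2*hP2 + U3*hP3)
      - (-2*s*t)*(V1*hP1 + V2*hP2 + V3*hP3)
      - (6*s-6*s^2)*hF2
      - (3*s^2-2*s)*(U1*hQ1 + U2*hQ2 + U3*hQ3)
      - (2*s*t)*(V1*hQ1 + V2*hQ2 + V3*hQ3)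
      - (t^2)*(U1*hR1 + U2*hR2 + U3*hR3)
  have e2 : c * (s - s^2 - 2*s*t) = 0 := by
    rw [hcdef]
    linear_combination (V1*hZ1 + V2*hZ2 + V3*hZ3)
      - (-6*t+6*t^2)*hF1
      - (1-4*t+3*t^2-s^2)*(V1*hP1 + V2*hP2 + V3*hP3)
      - (-2*s*t)*(U1*hP1 + U2*hP2 + U3*hP3)
      - (6*t-6*t^2)*hF3
      - (3*t^2-2*t)*(V1*hR1 + V2*hR2 + V3*hR3)
      - (2*s*t)*(U1*hR1 + U2*hR2 + U3*hR3)
      - (s^2)*(V1*hQ1 + V2*hQ2 + V3*hQ3)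
  have e0 : c * (s*t - s^2*t - s*t^2) = 0 := by
    rw [hcdef]
    linear_combination hFz
      - (1 - 3*s^2 + 2*s^3 - 3*t^2 + 2*t^3)*hF1
      - (s - 2*s^2 + s^3 - s*t^2)*(U1*hP1 + U2*hP2 + U3*hP3)
      - (t - 2*t^2 + t^3 - s^2*t)*(V1*hP1 + V2*hP2 + V3*hP3)
      - (3*s^2 - 2*s^3)*hF2
      - (s^3 - s^2)*(U1*hQ1 + U2*hQ2 + U3*hQ3)
      - (s^2*t)*(V1*hQ1 + V2*hQ2 + V3*hQ3)
      - (3*t^2 - 2*t^3)*hF3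
      - (t^3 - t^2)*(V1*hR1 + V2*hR2 + V3*hR3)
      - (s*t^2)*(U1*hR1 + U2*hR2 + U3*hR3)
  have E1 : t * (1 - 2*s - t) = 0 := by
    have h := (mul_eq_zero.1 e1).resolve_left hc
    linear_combination h
  have E2 : s * (1 - s - 2*t) = 0 := by
    have h := (mul_eq_zero.1 e2).resolve_left hc
    linear_combination h
  have E0 : s * (t * (1 - s - t)) = 0 := by
    have h := (mul_eq_zero.1 e0).resolve_left hc
    linear_combination h
  rcases mul_eq_zero.1 E1 with ht | hl1
  · rcases mul_eq_zero.1 E2 with hs | hl2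
    · exact Or.inl ⟨hs, ht⟩
    · have hs : s = 1 := by linear_combination -hl2 - 2*ht
      exact Or.inr (Or.inl ⟨hs, ht⟩)
  · rcases mul_eq_zero.1 E2 with hs | hl2
    · have ht : t = 1 := by linear_combination -hl1 - 2*hs
      exact Or.inr (Or.inr ⟨hs, ht⟩)
    · exfalso
      have hs : s = 1/3 := by linear_combination (-2/3)*hl1 + (1/3)*hl2
      have ht : t = 1/3 := by linear_combination (1/3)*hl1 + (-2/3)*hl2
      rw [hs, ht] at E0
      norm_num at E0


lemma nsymm {x1 x2 x3 y1 y2 y3 : ℂ} (h : ¬(x1=y1∧x2=y2∧x3=y3)) :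
    ¬(y1=x1∧y2=x2∧y3=x3) := fun hh => h ⟨hh.1.symm, hh.2.1.symm, hh.2.2.symm⟩

lemma cramer3 {U1 U2 U3 V1 V2 V3 w1 w2 w3 m1 m2 m3 : ℂ}
    (hdet : U1*(V2*w3-V3*w2) - U2*(V1*w3-V3*w1) + U3*(V1*w2-V2*w1) ≠ 0) :
    ∃ s t β : ℂ, (s*U1 + t*V1 - β*w1 = m1) ∧ (s*U2 + t*V2 - β*w2 = m2)
      ∧ (s*U3 + t*V3 - β*w3 = m3) := by
  set Δ := U1*(V2*w3-V3*w2) - U2*(V1*w3-V3*w1) + U3*(V1*w2-V2*w1) with hΔ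
  refine ⟨(m1*(V2*w3-V3*w2) - m2*(V1*w3-V3*w1) + m3*(V1*w2-V2*w1))/Δ,
          (U1*(m2*w3-m3*w2) - U2*(m1*w3-m3*w1) + U3*(m1*w2-m2*w1))/Δ,
          -(U1*(V2*m3-V3*m2) - U2*(V1*m3-V3*m1) + U3*(V1*m2-V2*m1))/Δ, ?_, ?_, ?_⟩ <;>
    · field_simp
      ring

/-- Non-collinearity of three distinct singular points (direction form). -/
lemma noncol {t1 t2 t3 t4 p1 p2 p3 q1 q2 q3 r1 r2 r3 : ℂ}
    (hP : SingP t1 t2 t3 t4 p1 p2 p3) (hQ : SingP t1 t2 t3 t4 q1 q2 q3)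
    (hR : SingP t1 t2 t3 t4 r1 r2 r3)
    (hQP : ¬(q1=p1∧q2=p2∧q3=p3)) (hRP : ¬(r1=p1∧r2=p2∧r3=p3))
    (hRQ : ¬(r1=q1∧r2=q2∧r3=q3)) :
    ∀ l : ℂ, ¬(r1 - p1 = l*(q1-p1) ∧ r2 - p2 = l*(q2-p2) ∧ r3 - p3 = l*(q3-p3)) := by
  intro l h
  obtain ⟨h1, h2, h3⟩ := h
  have hl0 : l ≠ 0 := by
    rintro rfl
    exact hRP ⟨by linear_combination h1, by linear_combination h2, by linear_combination h3⟩
  have hl1 : l ≠ 1 := by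
    rintro rfl
    exact hRQ ⟨by linear_combination h1, by linear_combination h2, by linear_combination h3⟩
  have e1 : r1 = p1 + l*(q1-p1) := by linear_combination h1
  have e2 : r2 = p2 + l*(q2-p2) := by linear_combination h2
  have e3 : r3 = p3 + l*(q3-p3) := by linear_combination h3
  rw [e1, e2, e3] at hR
  exact no3col hP hQ hR hl0 hl1 hQP

/-- Value of f on the plane through three singular points. -/
lemma plane_value {t1 t2 t3 t4 p1 p2 p3 U1 U2 U3 V1 V2 V3 s t : ℂ}
    (h1 : SingP t1 t2 t3 t4 p1 p2 p3)
    (h2 : SingP t1 t2 t3 t4 (p1+U1) (p2+U2) (p3+U3))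
    (h3 : SingP t1 t2 t3 t4 (p1+V1) (p2+V2) (p3+V3))
    (hfz : (p1+s*U1+t*V1) * (p2+s*U2+t*V2) * (p3+s*U3+t*V3)
      + (p1+s*U1+t*V1)^2 + (p2+s*U2+t*V2)^2 + (p3+s*U3+t*V3)^2
      - t1*(p1+s*U1+t*V1) - t2*(p2+s*U2+t*V2) - t3*(p3+s*U3+t*V3) + t4 = 0) :
    (U1*V2*p3 + U1*p2*V3 + p1*U2*V3 + V1*U2*p3 + V1*p2*U3 + p1*V2*U3
      + 2*(U1*V1+U2*V2+U3*V3)) * (s*t - s^2*t - s*t^2) = 0 := by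
  obtain ⟨hF1, hP1, hP2, hP3⟩ := h1
  obtain ⟨hF2, hQ1, hQ2, hQ3⟩ := h2
  obtain ⟨hF3, hR1, hR2, hR3⟩ := h3
  linear_combination hfz
    - (1 - 3*s^2 + 2*s^3 - 3*t^2 + 2*t^3)*hF1
    - (s - 2*s^2 + s^3 - s*t^2)*(U1*hP1 + U2*hP2 + U3*hP3)
    - (t - 2*t^2 + t^3 - s^2*t)*(V1*hP1 + V2*hP2 + V3*hP3)
    - (3*s^2 - 2*s^3)*hF2
    - (s^3 - s^2)*(U1*hQ1 + U2*hQ2 + U3*hQ3)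
    - (s^2*t)*(V1*hQ1 + V2*hQ2 + V3*hQ3)
    - (3*t^2 - 2*t^3)*hF3
    - (t^3 - t^2)*(V1*hR1 + V2*hR2 + V3*hR3)
    - (s*t^2)*(U1*hR1 + U2*hR2 + U3*hR3)

/-- Core case: plane through a,b,c; line through d,e; non-parallel. -/
lemma main_case {t1 t2 t3 t4 a1 a2 a3 b1 b2 b3 c1 c2 c3 d1 d2 d3 e1 e2 e3 : ℂ}
    (hA : SingP t1 t2 t3 t4 a1 a2 a3) (hB : SingP t1 t2 t3 t4 b1 b2 b3)
    (hC : SingP t1 t2 t3 t4 c1 c2 c3) (hD : SingP t1 t2 t3 t4 d1 d2 d3)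
    (hE : SingP t1 t2 t3 t4 e1 e2 e3)
    (hab : ¬(b1=a1∧b2=a2∧b3=a3)) (hac : ¬(c1=a1∧c2=a2∧c3=a3))
    (hbc : ¬(c1=b1∧c2=b2∧c3=b3)) (had : ¬(d1=a1∧d2=a2∧d3=a3))
    (hbd : ¬(d1=b1∧d2=b2∧d3=b3)) (hcd : ¬(d1=c1∧d2=c2∧d3=c3))
    (hae : ¬(e1=a1∧e2=a2∧e3=a3)) (hbe : ¬(e1=b1∧e2=b2∧e3=b3))
    (hce : ¬(e1=c1∧e2=c2∧e3=c3)) (hde : ¬(e1=d1∧e2=d2∧e3=d3))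
    (hdet : (b1-a1)*((c2-a2)*(e3-d3)-(c3-a3)*(e2-d2))
      - (b2-a2)*((c1-a1)*(e3-d3)-(c3-a3)*(e1-d1))
      + (b3-a3)*((c1-a1)*(e2-d2)-(c2-a2)*(e1-d1)) ≠ 0) : False := by
  -- singular points in translated form
  have hB' : SingP t1 t2 t3 t4 (a1+(b1-a1)) (a2+(b2-a2)) (a3+(b3-a3)) := by
    rw [show a1+(b1-a1) = b1 by ring, show a2+(b2-a2) = b2 by ring,
        show a3+(b3-a3) = b3 by ring]; exact hB
  have hC' : SingP t1 t2 t3 t4 (a1+(c1-a1)) (a2+(c2-a2)) (a3+(c3-a3)) := by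
    rw [show a1+(c1-a1) = c1 by ring, show a2+(c2-a2) = c2 by ring,
        show a3+(c3-a3) = c3 by ring]; exact hC
  have hD' : SingP t1 t2 t3 t4 (a1+(d1-a1)) (a2+(d2-a2)) (a3+(d3-a3)) := by
    rw [show a1+(d1-a1) = d1 by ring, show a2+(d2-a2) = d2 by ring,
        show a3+(d3-a3) = d3 by ring]; exact hD
  have hBc : SingP t1 t2 t3 t4 (c1+(b1-c1)) (c2+(b2-c2)) (c3+(b3-c3)) := by
    rw [show c1+(b1-c1) = b1 by ring, show c2+(b2-c2) = b2 by ring,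
        show c3+(b3-c3) = b3 by ring]; exact hB
  have hDc : SingP t1 t2 t3 t4 (c1+(d1-c1)) (c2+(d2-c2)) (c3+(d3-c3)) := by
    rw [show c1+(d1-c1) = d1 by ring, show c2+(d2-c2) = d2 by ring,
        show c3+(d3-c3) = d3 by ring]; exact hD
  have hUab : ¬((b1-a1) = 0 ∧ (b2-a2) = 0 ∧ (b3-a3) = 0) := fun h =>
    hab ⟨by linear_combination h.1, by linear_combination h.2.1, by linear_combination h.2.2⟩
  have hUac : ¬((c1-a1) = 0 ∧ (c2-a2) = 0 ∧ (c3-a3) = 0) := fun h =>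
    hac ⟨by linear_combination h.1, by linear_combination h.2.1, by linear_combination h.2.2⟩
  have hUcb : ¬((b1-c1) = 0 ∧ (b2-c2) = 0 ∧ (b3-c3) = 0) := fun h =>
    hbc ⟨by linear_combination -h.1, by linear_combination -h.2.1, by linear_combination -h.2.2⟩
  -- c ≠ 0 for the plane (a,b,c)
  have hcabc := cross_ne_zero hA hB' hC' hUab (noncol hA hB hC hab hac hbc)
  -- intersection of line d-e with plane
  obtain ⟨s, t, β, k1, k2, k3⟩ := cramer3 (m1 := d1-a1) (m2 := d2-a2) (m3 := d3-a3) hdet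
  have hz1 : a1 + s*(b1-a1) + t*(c1-a1) = d1 + β*(e1-d1) := by linear_combination k1
  have hz2 : a2 + s*(b2-a2) + t*(c2-a2) = d2 + β*(e2-d2) := by linear_combination k2
  have hz3 : a3 + s*(b3-a3) + t*(c3-a3) = d3 + β*(e3-d3) := by linear_combination k3
  rcases eq_or_ne β 0 with hβ | hβ
  · -- d lies in the plane
    rw [hβ] at hz1 hz2 hz3
    have hd1 : d1 = a1 + s*(b1-a1) + t*(c1-a1) := by linear_combination -hz1
    have hd2 : d2 = a2 + s*(b2-a2) + t*(c2-a2) := by linear_combination -hz2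
    have hd3 : d3 = a3 + s*(b3-a3) + t*(c3-a3) := by linear_combination -hz3
    rw [hd1, hd2, hd3] at hD
    rcases in_plane_classify hA hB' hC' hD hcabc with ⟨hs, ht⟩ | ⟨hs, ht⟩ | ⟨hs, ht⟩
    · exact had ⟨by rw [hd1, hs, ht]; ring, by rw [hd2, hs, ht]; ring,
        by rw [hd3, hs, ht]; ring⟩
    · exact hbd ⟨by rw [hd1, hs, ht]; ring, by rw [hd2, hs, ht]; ring,
        by rw [hd3, hs, ht]; ring⟩
    · exact hcd ⟨by rw [hd1, hs, ht]; ring, by rw [hd2, hs, ht]; ring,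
        by rw [hd3, hs, ht]; ring⟩
  · -- the intersection point z = d + β(e-d) satisfies f(z) = 0
    have hfz := line_vanish hD hE β
    rw [← hz1, ← hz2, ← hz3] at hfz
    have he0 := plane_value hA hB' hC' hfz
    have hE0 : s * (t * (1 - s - t)) = 0 := by
      have h := (mul_eq_zero.1 he0).resolve_left hcabc
      linear_combination h
    rcases mul_eq_zero.1 hE0 with hs | h'
    · -- z on line a-c : plane (a,c,d)
      have he1 : e1 = a1 + (t/β)*(c1-a1) + ((β-1)/β)*(d1-a1) := by
        field_simp
        linear_combination -hz1 + (b1-a1)*hs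
      have he2 : e2 = a2 + (t/β)*(c2-a2) + ((β-1)/β)*(d2-a2) := by
        field_simp
        linear_combination -hz2 + (b2-a2)*hs
      have he3 : e3 = a3 + (t/β)*(c3-a3) + ((β-1)/β)*(d3-a3) := by
        field_simp
        linear_combination -hz3 + (b3-a3)*hs
      rw [he1, he2, he3] at hE
      have hc2 := cross_ne_zero hA hC' hD' hUac (noncol hA hC hD hac had hcd)
      rcases in_plane_classify hA hC' hD' hE hc2 with ⟨hs', ht'⟩ | ⟨hs', ht'⟩ | ⟨hs', ht'⟩
      · exact hae ⟨by rw [he1, hs', ht']; ring, by rw [he2, hs', ht']; ring,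
          by rw [he3, hs', ht']; ring⟩
      · exact hce ⟨by rw [he1, hs', ht']; ring, by rw [he2, hs', ht']; ring,
          by rw [he3, hs', ht']; ring⟩
      · exact hde ⟨by rw [he1, hs', ht']; ring, by rw [he2, hs', ht']; ring,
          by rw [he3, hs', ht']; ring⟩
    rcases mul_eq_zero.1 h' with ht | hst
    · -- z on line a-b : plane (a,b,d)
      have he1 : e1 = a1 + (s/β)*(b1-a1) + ((β-1)/β)*(d1-a1) := by
        field_simp
        linear_combination -hz1 + (c1-a1)*ht
      have he2 : e2 = a2 + (s/β)*(b2-a2) + ((β-1)/β)*(d2-a2) := by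
        field_simp
        linear_combination -hz2 + (c2-a2)*ht
      have he3 : e3 = a3 + (s/β)*(b3-a3) + ((β-1)/β)*(d3-a3) := by
        field_simp
        linear_combination -hz3 + (c3-a3)*ht
      rw [he1, he2, he3] at hE
      have hc2 := cross_ne_zero hA hB' hD' hUab (noncol hA hB hD hab had hbd)
      rcases in_plane_classify hA hB' hD' hE hc2 with ⟨hs', ht'⟩ | ⟨hs', ht'⟩ | ⟨hs', ht'⟩
      · exact hae ⟨by rw [he1, hs', ht']; ring, by rw [he2, hs', ht']; ring,
          by rw [he3, hs', ht']; ring⟩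
      · exact hbe ⟨by rw [he1, hs', ht']; ring, by rw [he2, hs', ht']; ring,
          by rw [he3, hs', ht']; ring⟩
      · exact hde ⟨by rw [he1, hs', ht']; ring, by rw [he2, hs', ht']; ring,
          by rw [he3, hs', ht']; ring⟩
    · -- z on line c-b : plane (c,b,d)
      have he1 : e1 = c1 + (s/β)*(b1-c1) + ((β-1)/β)*(d1-c1) := by
        field_simp
        linear_combination -hz1 + (a1-c1)*hst
      have he2 : e2 = c2 + (s/β)*(b2-c2) + ((β-1)/β)*(d2-c2) := by
        field_simp
        linear_combination -hz2 + (a2-c2)*hst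
      have he3 : e3 = c3 + (s/β)*(b3-c3) + ((β-1)/β)*(d3-c3) := by
        field_simp
        linear_combination -hz3 + (a3-c3)*hst
      rw [he1, he2, he3] at hE
      have hc2 := cross_ne_zero hC hBc hDc hUcb
        (noncol hC hB hD (nsymm hbc) hcd hbd)
      rcases in_plane_classify hC hBc hDc hE hc2 with ⟨hs', ht'⟩ | ⟨hs', ht'⟩ | ⟨hs', ht'⟩
      · exact hce ⟨by rw [he1, hs', ht']; ring, by rw [he2, hs', ht']; ring,
          by rw [he3, hs', ht']; ring⟩
      · exact hbe ⟨by rw [he1, hs', ht']; ring, by rw [he2, hs', ht']; ring,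
          by rw [he3, hs', ht']; ring⟩
      · exact hde ⟨by rw [he1, hs', ht']; ring, by rw [he2, hs', ht']; ring,
          by rw [he3, hs', ht']; ring⟩

lemma dep_of_minors {u1 u2 u3 v1 v2 v3 : ℂ} (hU : ¬(u1=0∧u2=0∧u3=0))
    (h12 : u1*v2 - u2*v1 = 0) (h13 : u1*v3 - u3*v1 = 0) (h23 : u2*v3 - u3*v2 = 0) :
    ∃ l : ℂ, v1 = l*u1 ∧ v2 = l*u2 ∧ v3 = l*u3 := by
  rcases eq_or_ne u1 0 with hu1 | hu1
  · rcases eq_or_ne u2 0 with hu2 | hu2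
    · have hu3 : u3 ≠ 0 := fun h => hU ⟨hu1, hu2, h⟩
      refine ⟨v3/u3, ?_, ?_, by field_simp⟩
      · have : u3*v1 = 0 := by linear_combination -h13 + v3*hu1
        rw [hu1, mul_zero]; exact (mul_eq_zero.1 this).resolve_left hu3
      · have : u3*v2 = 0 := by linear_combination -h23 + v3*hu2
        rw [hu2, mul_zero]; exact (mul_eq_zero.1 this).resolve_left hu3
    · refine ⟨v2/u2, ?_, by field_simp, ?_⟩
      · have : u2*v1 = 0 := by linear_combination -h12 + v2*hu1
        rw [hu1, mul_zero]; exact (mul_eq_zero.1 this).resolve_left hu2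
      · field_simp; linear_combination h23
  · refine ⟨v1/u1, by field_simp, ?_, ?_⟩
    · field_simp; linear_combination h12
    · field_simp; linear_combination h13

/-- There are no five distinct singular points. -/
lemma plane_aux {a u v d N1 N2 D : ℂ} (hD : D ≠ 0) (h : N1*u + N2*v = (d-a)*D) :
    a + N1/D*u + N2/D*v = d := by
  rw [div_mul_eq_mul_div, div_mul_eq_mul_div, add_assoc, ← add_div, h,
    mul_div_assoc, div_self hD]; ring

lemma five_false {t1 t2 t3 t4 a1 a2 a3 b1 b2 b3 c1 c2 c3 d1 d2 d3 e1 e2 e3 : ℂ}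
    (hA : SingP t1 t2 t3 t4 a1 a2 a3) (hB : SingP t1 t2 t3 t4 b1 b2 b3)
    (hC : SingP t1 t2 t3 t4 c1 c2 c3) (hD : SingP t1 t2 t3 t4 d1 d2 d3)
    (hE : SingP t1 t2 t3 t4 e1 e2 e3)
    (hab : ¬(b1=a1∧b2=a2∧b3=a3)) (hac : ¬(c1=a1∧c2=a2∧c3=a3))
    (hbc : ¬(c1=b1∧c2=b2∧c3=b3)) (had : ¬(d1=a1∧d2=a2∧d3=a3))
    (hbd : ¬(d1=b1∧d2=b2∧d3=b3)) (hcd : ¬(d1=c1∧d2=c2∧d3=c3))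
    (hae : ¬(e1=a1∧e2=a2∧e3=a3)) (hbe : ¬(e1=b1∧e2=b2∧e3=b3))
    (hce : ¬(e1=c1∧e2=c2∧e3=c3)) (hde : ¬(e1=d1∧e2=d2∧e3=d3)) : False := by
  have hB' : SingP t1 t2 t3 t4 (a1+(b1-a1)) (a2+(b2-a2)) (a3+(b3-a3)) := by
    rw [show a1+(b1-a1) = b1 by ring, show a2+(b2-a2) = b2 by ring,
        show a3+(b3-a3) = b3 by ring]; exact hB
  have hC' : SingP t1 t2 t3 t4 (a1+(c1-a1)) (a2+(c2-a2)) (a3+(c3-a3)) := by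
    rw [show a1+(c1-a1) = c1 by ring, show a2+(c2-a2) = c2 by ring,
        show a3+(c3-a3) = c3 by ring]; exact hC
  have hUab : ¬((b1-a1) = 0 ∧ (b2-a2) = 0 ∧ (b3-a3) = 0) := fun h =>
    hab ⟨by linear_combination h.1, by linear_combination h.2.1, by linear_combination h.2.2⟩
  have hcabc := cross_ne_zero hA hB' hC' hUab (noncol hA hB hC hab hac hbc)
  -- Δ0 ≠ 0 : a,b,c,d are not coplanar
  have hΔ0 : (b1-a1)*((c2-a2)*(d3-a3)-(c3-a3)*(d2-a2))
      - (b2-a2)*((c1-a1)*(d3-a3)-(c3-a3)*(d1-a1))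
      + (b3-a3)*((c1-a1)*(d2-a2)-(c2-a2)*(d1-a1)) ≠ 0 := by
    intro h0
    have hplane : ∃ s t : ℂ, a1 + s*(b1-a1) + t*(c1-a1) = d1 ∧
        a2 + s*(b2-a2) + t*(c2-a2) = d2 ∧ a3 + s*(b3-a3) + t*(c3-a3) = d3 := by
      rcases eq_or_ne ((b1-a1)*(c2-a2) - (b2-a2)*(c1-a1)) 0 with hm12 | hm12
      · rcases eq_or_ne ((b1-a1)*(c3-a3) - (b3-a3)*(c1-a1)) 0 with hm13 | hm13
        · rcases eq_or_ne ((b2-a2)*(c3-a3) - (b3-a3)*(c2-a2)) 0 with hm23 | hm23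
          · obtain ⟨l, hl⟩ := dep_of_minors hUab hm12 hm13 hm23
            exact absurd hl (noncol hA hB hC hab hac hbc l)
          · refine ⟨((d2-a2)*(c3-a3) - (d3-a3)*(c2-a2)) / ((b2-a2)*(c3-a3) - (b3-a3)*(c2-a2)),
              ((b2-a2)*(d3-a3) - (b3-a3)*(d2-a2)) / ((b2-a2)*(c3-a3) - (b3-a3)*(c2-a2)),
              ?_, plane_aux hm23 (by ring), plane_aux hm23 (by ring)⟩
            refine plane_aux hm23 ?_
            linear_combination (-1)*h0
        · refine ⟨((d1-a1)*(c3-a3) - (d3-a3)*(c1-a1)) / ((b1-a1)*(c3-a3) - (b3-a3)*(c1-a1)),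
            ((b1-a1)*(d3-a3) - (b3-a3)*(d1-a1)) / ((b1-a1)*(c3-a3) - (b3-a3)*(c1-a1)),
            plane_aux hm13 (by ring), ?_, plane_aux hm13 (by ring)⟩
          refine plane_aux hm13 ?_
          linear_combination (1)*h0
      · refine ⟨((d1-a1)*(c2-a2) - (d2-a2)*(c1-a1)) / ((b1-a1)*(c2-a2) - (b2-a2)*(c1-a1)),
          ((b1-a1)*(d2-a2) - (b2-a2)*(d1-a1)) / ((b1-a1)*(c2-a2) - (b2-a2)*(c1-a1)),
          plane_aux hm12 (by ring), plane_aux hm12 (by ring), ?_⟩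
        refine plane_aux hm12 ?_
        linear_combination (-1)*h0
    obtain ⟨s, t, hd1, hd2, hd3⟩ := hplane
    rw [← hd1, ← hd2, ← hd3] at hD
    rcases in_plane_classify hA hB' hC' hD hcabc with ⟨hs, ht⟩ | ⟨hs, ht⟩ | ⟨hs, ht⟩
    · exact had ⟨by rw [← hd1, hs, ht]; ring, by rw [← hd2, hs, ht]; ring,
        by rw [← hd3, hs, ht]; ring⟩
    · exact hbd ⟨by rw [← hd1, hs, ht]; ring, by rw [← hd2, hs, ht]; ring,
        by rw [← hd3, hs, ht]; ring⟩
    · exact hcd ⟨by rw [← hd1, hs, ht]; ring, by rw [← hd2, hs, ht]; ring,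
        by rw [← hd3, hs, ht]; ring⟩
  -- one of the four plane/line configurations is non-parallel
  rcases eq_or_ne ((b1-a1)*((c2-a2)*(e3-d3)-(c3-a3)*(e2-d2))
      - (b2-a2)*((c1-a1)*(e3-d3)-(c3-a3)*(e1-d1))
      + (b3-a3)*((c1-a1)*(e2-d2)-(c2-a2)*(e1-d1))) 0 with hDA | hDA
  case inr => exact main_case hA hB hC hD hE hab hac hbc had hbd hcd hae hbe hce hde hDA
  rcases eq_or_ne ((b1-a1)*((d2-a2)*(e3-c3)-(d3-a3)*(e2-c2))
      - (b2-a2)*((d1-a1)*(e3-c3)-(d3-a3)*(e1-c1))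
      + (b3-a3)*((d1-a1)*(e2-c2)-(d2-a2)*(e1-c1))) 0 with hDB | hDB
  case inr => exact main_case hA hB hD hC hE hab had hbd hac hbc (nsymm hcd) hae hbe hde hce hDB
  rcases eq_or_ne ((c1-a1)*((d2-a2)*(e3-b3)-(d3-a3)*(e2-b2))
      - (c2-a2)*((d1-a1)*(e3-b3)-(d3-a3)*(e1-b1))
      + (c3-a3)*((d1-a1)*(e2-b2)-(d2-a2)*(e1-b1))) 0 with hDC | hDC
  case inr => exact main_case hA hC hD hB hE hac had hcd hab (nsymm hbc) (nsymm hbd) hae hce hde hbe hDC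
  rcases eq_or_ne ((c1-b1)*((d2-b2)*(e3-a3)-(d3-b3)*(e2-a2))
      - (c2-b2)*((d1-b1)*(e3-a3)-(d3-b3)*(e1-a1))
      + (c3-b3)*((d1-b1)*(e2-a2)-(d2-b2)*(e1-a1))) 0 with hDD | hDD
  case inr => exact main_case hB hC hD hA hE hbc hbd hcd (nsymm hab) (nsymm hac) (nsymm had) hbe hce hde hae hDD
  exact hΔ0 (by linear_combination (-1/3)*hDA + (1/3)*hDB + (-1/3)*hDC + (1/3)*hDD)


/-- For every `θ`, the cubic surface `S(θ)` has at most four singular points. -/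
theorem singSet_finite_card_le_four (θ : ℂ × ℂ × ℂ × ℂ) :
    (singSet θ).Finite ∧ (singSet θ).ncard ≤ 4 := by
  classical
  have toSing : ∀ x ∈ singSet θ, SingP θ.1 θ.2.1 θ.2.2.1 θ.2.2.2 x.1 x.2.1 x.2.2 := by
    intro x hx
    obtain ⟨h1, h2, h3, h4⟩ := hx
    exact ⟨h1, h2, h3, h4⟩
  have hne : ∀ {x y : ℂ × ℂ × ℂ}, x ≠ y →
      ¬(y.1 = x.1 ∧ y.2.1 = x.2.1 ∧ y.2.2 = x.2.2) := by
    intro x y hxy h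
    exact hxy (Prod.ext_iff.2 ⟨h.1, Prod.ext_iff.2 ⟨h.2.1, h.2.2⟩⟩).symm
  have hcard : ∀ S : Finset (ℂ × ℂ × ℂ), ↑S ⊆ singSet θ → S.card ≤ 4 := by
    intro S hS
    by_contra hgt
    push_neg at hgt
    obtain ⟨T, hTS, hT⟩ := Finset.exists_subset_card_eq (show 5 ≤ S.card from hgt)
    obtain ⟨p, T1, hpT1, rfl, hT1⟩ := Finset.card_eq_succ.1 hT
    obtain ⟨q, T2, hqT2, rfl, hT2⟩ := Finset.card_eq_succ.1 hT1
    obtain ⟨r, T3, hrT3, rfl, hT3⟩ := Finset.card_eq_succ.1 hT2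
    obtain ⟨u, T4, huT4, rfl, hT4⟩ := Finset.card_eq_succ.1 hT3
    obtain ⟨v, T5, hvT5, rfl, hT5⟩ := Finset.card_eq_succ.1 hT4
    have hp : p ∈ singSet θ := hS (hTS (by simp))
    have hq : q ∈ singSet θ := hS (hTS (by simp))
    have hr : r ∈ singSet θ := hS (hTS (by simp))
    have hu : u ∈ singSet θ := hS (hTS (by simp))
    have hv : v ∈ singSet θ := hS (hTS (by simp))
    have hpq : p ≠ q := fun h => hpT1 (by simp [h])
    have hpr : p ≠ r := fun h => hpT1 (by simp [h])
    have hpu : p ≠ u := fun h => hpT1 (by simp [h])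
    have hpv : p ≠ v := fun h => hpT1 (by simp [h])
    have hqr : q ≠ r := fun h => hqT2 (by simp [h])
    have hqu : q ≠ u := fun h => hqT2 (by simp [h])
    have hqv : q ≠ v := fun h => hqT2 (by simp [h])
    have hru : r ≠ u := fun h => hrT3 (by simp [h])
    have hrv : r ≠ v := fun h => hrT3 (by simp [h])
    have huv : u ≠ v := fun h => huT4 (by simp [h])
    exact five_false (toSing p hp) (toSing q hq) (toSing r hr) (toSing u hu)
      (toSing v hv) (hne hpq) (hne hpr) (hne hqr) (hne hpu) (hne hqu) (hne hru)
      (hne hpv) (hne hqv) (hne hrv) (hne huv)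
  have hfin : (singSet θ).Finite := by
    rw [← Set.not_infinite]
    intro hinf
    obtain ⟨T, hTsub, hT5⟩ := hinf.exists_subset_card_eq 5
    have := hcard T hTsub
    omega
  refine ⟨hfin, ?_⟩
  rw [Set.ncard_eq_toFinset_card _ hfin]
  exact hcard _ (by simp)
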